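/- For 1 ≤ k ≤ n, define R_{k|n}(p) = (1-p) h'_{k|n}(p)/(1 - h_{k|n}(p)). Then 1/R_{k|n}(p) = ∫₀¹ u^{n-k} ((1 - u(1-p))/p)^{k-1} du for all p ∈ (0,1), and R_{k|n}(p) is increasing in p ∈ (0,1). -/

import Mathlib

noncomputable def koonB (k n : ℕ) : ℝ :=
  ∫ u in (0:ℝ)..1, u ^ (k - 1) * (1 - u) ^ (n - k)

noncomputable def koonRel (k n : ℕ) (p : ℝ) : ℝ :=
  (1 / koonB k n) * ∫ u in (0:ℝ)..p, u ^ (k - 1) * (1 - u) ^ (n - k)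

/-- `R_{k|n}(p) = (1-p) h'_{k|n}(p) / (1 - h_{k|n}(p))`. -/
noncomputable def koonR (k n : ℕ) (p : ℝ) : ℝ :=
  (1 - p) * (p ^ (k - 1) * (1 - p) ^ (n - k) / koonB k n) / (1 - koonRel k n p)

lemma koonAux_intble (k n : ℕ) (a b : ℝ) :
    IntervalIntegrable (fun u : ℝ => u ^ (k-1) * (1-u) ^ (n-k)) MeasureTheory.volume a b :=
  (Continuous.intervalIntegrable (by continuity) a b)

lemma koonAux_pos (k n : ℕ) {p : ℝ} (hp : p ∈ Set.Ioo (0:ℝ) 1) :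
    0 < ∫ u in p..(1:ℝ), u ^ (k-1) * (1-u) ^ (n-k) := by
  refine intervalIntegral.intervalIntegral_pos_of_pos_on (koonAux_intble k n p 1) ?_ hp.2
  intro x hx
  exact mul_pos (pow_pos (lt_trans hp.1 hx.1) _) (pow_pos (by linarith [hx.2]) _)

lemma koonB_pos0 (k n : ℕ) : 0 < koonB k n := by
  refine intervalIntegral.intervalIntegral_pos_of_pos_on (koonAux_intble k n 0 1) ?_ one_pos
  intro x hx
  exact mul_pos (pow_pos hx.1 _) (pow_pos (by linarith [hx.2]) _)

lemma koonTail_eq (k n : ℕ) {p : ℝ} (hp : p ∈ Set.Ioo (0:ℝ) 1) :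
    (∫ u in p..(1:ℝ), u ^ (k-1) * (1-u) ^ (n-k)) =
      (1-p)^(n-k+1) * ∫ v in (0:ℝ)..1, v^(n-k) * (1-(1-p)*v)^(k-1) := by
  have h1p : (0:ℝ) < 1 - p := by linarith [hp.2]
  have hc : (-(1-p)) ≠ 0 := neg_ne_zero.mpr (ne_of_gt h1p)
  have h := intervalIntegral.integral_comp_mul_add (a := (0:ℝ)) (b := 1)
      (fun u => u ^ (k-1) * (1-u) ^ (n-k)) hc 1
  have e1 : -(1-p)*0+1 = (1:ℝ) := by ring
  have e2 : -(1-p)*1+1 = p := by ring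
  rw [e1, e2] at h
  have key : ∀ x : ℝ, (-(1-p)*x+1)^(k-1) * (1 - (-(1-p)*x+1))^(n-k)
      = (1-p)^(n-k) * (x^(n-k) * (1-(1-p)*x)^(k-1)) := by
    intro x
    have h2 : 1 - (-(1-p)*x+1) = (1-p)*x := by ring
    rw [h2, mul_pow]; ring
  simp only [key] at h
  rw [intervalIntegral.integral_const_mul, intervalIntegral.integral_symm p 1,
    smul_eq_mul] at h
  rw [pow_succ]
  field_simp at h
  replace h := h.symm
  linear_combination h

lemma koonK_pos (k n : ℕ) {p : ℝ} (hp : p ∈ Set.Ioo (0:ℝ) 1) :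
    0 < ∫ v in (0:ℝ)..1, v^(n-k) * (1-(1-p)*v)^(k-1) := by
  have hT := koonAux_pos k n hp
  rw [koonTail_eq k n hp] at hT
  have hpow : 0 < (1-p)^(n-k+1) := pow_pos (by linarith [hp.2]) _
  nlinarith

lemma koonR_rep (k n : ℕ) {p : ℝ} (hp : p ∈ Set.Ioo (0:ℝ) 1) :
    koonR k n p = p^(k-1) / ∫ v in (0:ℝ)..1, v^(n-k) * (1-(1-p)*v)^(k-1) := by
  have hB := koonB_pos0 k n
  have hT := koonAux_pos k n hp
  have hK := koonK_pos k n hp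
  have hsplit : (∫ u in (0:ℝ)..p, u^(k-1)*(1-u)^(n-k))
      + (∫ u in p..(1:ℝ), u^(k-1)*(1-u)^(n-k)) = koonB k n :=
    intervalIntegral.integral_add_adjacent_intervals (koonAux_intble k n 0 p)
      (koonAux_intble k n p 1)
  have hrel : 1 - koonRel k n p
      = (∫ u in p..(1:ℝ), u^(k-1)*(1-u)^(n-k)) / koonB k n := by
    rw [koonRel]
    field_simp
    linarith [hsplit]
  have hBne := ne_of_gt hB
  have hKne := ne_of_gt hK
  have h1p : ((1:ℝ)-p) ≠ 0 := by have := hp.2; intro h; linarith [sub_eq_zero.mp h]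
  rw [koonR, hrel, koonTail_eq k n hp, pow_succ]
  field_simp

lemma koonR_pos (k n : ℕ) {p : ℝ} (hp : p ∈ Set.Ioo (0:ℝ) 1) : 0 < koonR k n p := by
  rw [koonR_rep k n hp]
  exact div_pos (pow_pos hp.1 _) (koonK_pos k n hp)

lemma koonJ_eq (k n : ℕ) {p : ℝ} (hp : p ∈ Set.Ioo (0:ℝ) 1) :
    (∫ u in (0:ℝ)..1, u ^ (n - k) * ((1 - u * (1 - p)) / p) ^ (k - 1))
      = (∫ v in (0:ℝ)..1, v^(n-k) * (1-(1-p)*v)^(k-1)) / p^(k-1) := by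
  have hpne := ne_of_gt hp.1
  have : ∀ u : ℝ, u ^ (n - k) * ((1 - u * (1 - p)) / p) ^ (k - 1)
      = (u^(n-k) * (1-(1-p)*u)^(k-1)) / p^(k-1) := by
    intro u; rw [div_pow]; ring
  simp only [this]
  rw [intervalIntegral.integral_div]

lemma koonMain (k n : ℕ) {p : ℝ} (hp : p ∈ Set.Ioo (0:ℝ) 1) :
    1 / koonR k n p = ∫ u in (0:ℝ)..1, u ^ (n - k) * ((1 - u * (1 - p)) / p) ^ (k - 1) := by
  rw [koonR_rep k n hp, koonJ_eq k n hp, one_div_div]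

lemma koonJ_pos (k n : ℕ) {p : ℝ} (hp : p ∈ Set.Ioo (0:ℝ) 1) :
    0 < ∫ u in (0:ℝ)..1, u ^ (n - k) * ((1 - u * (1 - p)) / p) ^ (k - 1) := by
  rw [koonJ_eq k n hp]
  exact div_pos (koonK_pos k n hp) (pow_pos hp.1 _)

lemma koonJ_anti (k n : ℕ) {p q : ℝ} (hp : p ∈ Set.Ioo (0:ℝ) 1)
    (hq : q ∈ Set.Ioo (0:ℝ) 1) (hpq : p ≤ q) :
    (∫ u in (0:ℝ)..1, u ^ (n - k) * ((1 - u * (1 - q)) / q) ^ (k - 1))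
      ≤ ∫ u in (0:ℝ)..1, u ^ (n - k) * ((1 - u * (1 - p)) / p) ^ (k - 1) := by
  refine intervalIntegral.integral_mono_on zero_le_one
    (Continuous.intervalIntegrable (by continuity) 0 1)
    (Continuous.intervalIntegrable (by continuity) 0 1) ?_
  intro x hx
  have hbq : 0 ≤ (1 - x * (1 - q)) / q :=
    div_nonneg (by nlinarith [hx.1, hx.2, hq.1, hq.2]) (le_of_lt hq.1)
  have hle : (1 - x * (1 - q)) / q ≤ (1 - x * (1 - p)) / p := by
    rw [div_le_div_iff₀ hq.1 hp.1]
    nlinarith [hx.1, hx.2, hp.1, hq.2]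
  exact mul_le_mul_of_nonneg_left (pow_le_pow_left₀ hbq hle _) (pow_nonneg hx.1 _)

theorem koonR_integral_and_increasing (k n : ℕ) (hk : 1 ≤ k) (hkn : k ≤ n) :
    (∀ p ∈ Set.Ioo (0 : ℝ) 1,
      1 / koonR k n p =
        ∫ u in (0:ℝ)..1, u ^ (n - k) * ((1 - u * (1 - p)) / p) ^ (k - 1)) ∧
    MonotoneOn (koonR k n) (Set.Ioo (0 : ℝ) 1) := by
  refine ⟨fun p hp => koonMain k n hp, ?_⟩
  intro p hp q hq hpq
  have h1 : koonR k n p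
      = 1 / ∫ u in (0:ℝ)..1, u ^ (n - k) * ((1 - u * (1 - p)) / p) ^ (k - 1) := by
    rw [← koonMain k n hp, one_div_one_div]
  have h2 : koonR k n q
      = 1 / ∫ u in (0:ℝ)..1, u ^ (n - k) * ((1 - u * (1 - q)) / q) ^ (k - 1) := by
    rw [← koonMain k n hq, one_div_one_div]
  rw [h1, h2]
  exact one_div_le_one_div_of_le (koonJ_pos k n hq) (koonJ_anti k n hp hq hpq)
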